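/- Let n ≥ 1 and let i₁, …, iₙ, j, k be positive natural numbers. Then {j} + (n + 1 + Σ_{1≤u<v≤n} iᵤ·iᵥ) • {k} + Σ_{u=1}^{n} {iᵤ} + k • (Σ_{1≤u<v≤n} {iᵤ + iᵥ}) <DM {j + k + 1} + {i₁ + ⋯ + iₙ + 1} + {k}. -/
import Mathlib


/-- The Dershowitz–Manna order on multisets: `s <DM t` iff `t = z + x`, `s = z + y`
with `x` nonempty and every element of `y` strictly smaller than some element of `x`. -/
def IsDershowitzMannaLT {α : Type*} [LT α] (s t : Multiset α) : Prop :=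
  ∃ z x y : Multiset α, x ≠ 0 ∧ t = z + x ∧ s = z + y ∧ ∀ b ∈ y, ∃ a ∈ x, b < a

open Finset in
/-- For `n ≥ 1` and positive naturals `i₁, …, iₙ, j, k`, the multiset
inequality coming from the local duplication rule holds:
`{j} + (n + 1 + Σ_{u<v} iᵤ·iᵥ) • {k} + Σᵤ {iᵤ} + k • Σ_{u<v} {iᵤ + iᵥ}
  <DM {j + k + 1} + {i₁ + ⋯ + iₙ + 1} + {k}`. -/
theorem duplication_rule_isDershowitzMannaLT (n : ℕ) (hn : 1 ≤ n)
    (i : Fin n → ℕ) (j k : ℕ) (hi : ∀ u, 0 < i u) (hj : 0 < j) (hk : 0 < k) :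
    IsDershowitzMannaLT
      (({j} : Multiset ℕ)
        + (n + 1 + ∑ p ∈ univ.filter (fun p : Fin n × Fin n => p.1 < p.2),
            i p.1 * i p.2) • ({k} : Multiset ℕ)
        + ∑ u : Fin n, ({i u} : Multiset ℕ)
        + k • ∑ p ∈ univ.filter (fun p : Fin n × Fin n => p.1 < p.2),
            ({i p.1 + i p.2} : Multiset ℕ))
      (({j + k + 1} : Multiset ℕ) + {(∑ u, i u) + 1} + {k}) := by
  refine ⟨0, ({j + k + 1} : Multiset ℕ) + {(∑ u, i u) + 1} + {k},
      ({j} : Multiset ℕ)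
        + (n + 1 + ∑ p ∈ univ.filter (fun p : Fin n × Fin n => p.1 < p.2),
            i p.1 * i p.2) • ({k} : Multiset ℕ)
        + ∑ u : Fin n, ({i u} : Multiset ℕ)
        + k • ∑ p ∈ univ.filter (fun p : Fin n × Fin n => p.1 < p.2),
            ({i p.1 + i p.2} : Multiset ℕ), ?_, (zero_add _).symm, (zero_add _).symm, ?_⟩
  · simp
  intro b hb
  have hle : ∀ p : Fin n × Fin n, p.1 < p.2 → i p.1 + i p.2 ≤ ∑ u, i u := by
    intro p hp
    have hne : p.1 ≠ p.2 := ne_of_lt hp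
    calc i p.1 + i p.2 = ∑ u ∈ ({p.1, p.2} : Finset (Fin n)), i u := by
          rw [Finset.sum_pair hne]
      _ ≤ ∑ u, i u := Finset.sum_le_sum_of_subset (Finset.subset_univ _)
  simp only [Multiset.mem_add] at hb
  rcases hb with ((hb | hb) | hb) | hb
  · -- b = j
    refine ⟨j + k + 1, by simp, ?_⟩
    simp only [Multiset.mem_singleton] at hb
    omega
  · -- b = k (from nsmul)
    have : b ∈ ({k} : Multiset ℕ) := Multiset.mem_of_mem_nsmul hb
    refine ⟨j + k + 1, by simp, ?_⟩
    simp only [Multiset.mem_singleton] at this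
    omega
  · -- b = i u for some u
    rw [Multiset.mem_sum] at hb
    obtain ⟨u, _, hu⟩ := hb
    simp only [Multiset.mem_singleton] at hu
    refine ⟨(∑ u, i u) + 1, by simp, ?_⟩
    have : i u ≤ ∑ u, i u := Finset.single_le_sum (fun _ _ => Nat.zero_le _) (mem_univ u)
    omega
  · -- b = i p.1 + i p.2
    have hb' := Multiset.mem_of_mem_nsmul hb
    rw [Multiset.mem_sum] at hb'
    obtain ⟨p, hp, hpb⟩ := hb'
    simp only [Finset.mem_filter] at hp
    simp only [Multiset.mem_singleton] at hpb
    refine ⟨(∑ u, i u) + 1, by simp, ?_⟩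
    have := hle p hp.2
    omega
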